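/- Let n ≥ 1, 0 ≤ α < π/2, and let A, B ∈ Mₙ(ℂ) satisfy A, B ∈ S_α. Then w(AB) ≤ sec(α)²·w(A)·w(B). -/

import Mathlib

open Matrix MeasureTheory
open scoped ComplexOrder

attribute [local instance] Matrix.normedAddCommGroup Matrix.normedSpace

/-- The numerical radius of a complex `n × n` matrix. -/
noncomputable def nradius {n : ℕ} (A : Matrix (Fin n) (Fin n) ℂ) : ℝ :=
  sSup {r : ℝ | ∃ x : EuclideanSpace ℂ (Fin n), ‖x‖ = 1 ∧
    r = ‖(inner ℂ x (Matrix.toEuclideanCLM (𝕜 := ℂ) A x) : ℂ)‖}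

/-- The operator (spectral) norm of a complex `n × n` matrix. -/
noncomputable def opNorm {n : ℕ} (A : Matrix (Fin n) (Fin n) ℂ) : ℝ :=
  ‖(Matrix.toEuclideanCLM (𝕜 := ℂ) A :
      EuclideanSpace ℂ (Fin n) →L[ℂ] EuclideanSpace ℂ (Fin n))‖

/-- The real part `(A + Aᴴ)/2` of a matrix. -/
noncomputable def matRe {n : ℕ} (A : Matrix (Fin n) (Fin n) ℂ) : Matrix (Fin n) (Fin n) ℂ :=
  (1 / 2 : ℂ) • (A + Aᴴ)

/-- `A ∈ S_α` : `Re A` is positive definite and the numerical range of `A` lies in the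
sector `{z : |Im z| ≤ tan α · Re z}`. -/
def InSector {n : ℕ} (α : ℝ) (A : Matrix (Fin n) (Fin n) ℂ) : Prop :=
  (matRe A).PosDef ∧ ∀ x : EuclideanSpace ℂ (Fin n), ‖x‖ = 1 →
    |(inner ℂ x (Matrix.toEuclideanCLM (𝕜 := ℂ) A x) : ℂ).im| ≤
      Real.tan α * ((inner ℂ x (Matrix.toEuclideanCLM (𝕜 := ℂ) A x) : ℂ)).re

open ContinuousLinearMap

lemma nradius_bddAbove {n : ℕ} (A : Matrix (Fin n) (Fin n) ℂ) :
    BddAbove {r : ℝ | ∃ x : EuclideanSpace ℂ (Fin n), ‖x‖ = 1 ∧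
      r = ‖(inner ℂ x (Matrix.toEuclideanCLM (𝕜 := ℂ) A x) : ℂ)‖} := by
  refine ⟨opNorm A, ?_⟩
  rintro r ⟨x, hx, rfl⟩
  calc ‖(inner ℂ x (Matrix.toEuclideanCLM (𝕜 := ℂ) A x) : ℂ)‖
      ≤ ‖x‖ * ‖Matrix.toEuclideanCLM (𝕜 := ℂ) A x‖ := norm_inner_le_norm _ _
    _ ≤ ‖x‖ * (opNorm A * ‖x‖) :=
        mul_le_mul_of_nonneg_left ((Matrix.toEuclideanCLM (𝕜 := ℂ) A).le_opNorm x)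
          (norm_nonneg x)
    _ = opNorm A := by rw [hx]; ring

lemma le_nradius {n : ℕ} (A : Matrix (Fin n) (Fin n) ℂ) {x : EuclideanSpace ℂ (Fin n)}
    (hx : ‖x‖ = 1) : ‖(inner ℂ x (Matrix.toEuclideanCLM (𝕜 := ℂ) A x) : ℂ)‖ ≤ nradius A :=
  le_csSup (nradius_bddAbove A) ⟨x, hx, rfl⟩

lemma exists_unit_vec {n : ℕ} (hn : 1 ≤ n) : ∃ x : EuclideanSpace ℂ (Fin n), ‖x‖ = 1 :=
  ⟨EuclideanSpace.single ⟨0, hn⟩ (1 : ℂ), by simp [EuclideanSpace.norm_single]⟩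

lemma nradius_nonneg {n : ℕ} (hn : 1 ≤ n) (A : Matrix (Fin n) (Fin n) ℂ) :
    0 ≤ nradius A := by
  obtain ⟨x, hx⟩ := exists_unit_vec hn
  exact le_trans (norm_nonneg _) (le_nradius A hx)

lemma selfadj_norm_le {n : ℕ} {T : EuclideanSpace ℂ (Fin n) →L[ℂ] EuclideanSpace ℂ (Fin n)}
    (hT : star T = T) {c : ℝ} (hc : 0 ≤ c)
    (h : ∀ x : EuclideanSpace ℂ (Fin n), |(inner ℂ x (T x) : ℂ).re| ≤ c * ‖x‖ ^ 2) :
    ‖T‖ ≤ c := by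
  have hadj : ContinuousLinearMap.adjoint T = T := by rw [← star_eq_adjoint, hT]
  have key : ∀ x y : EuclideanSpace ℂ (Fin n),
      4 * (inner ℂ (T x) y : ℂ).re =
        (inner ℂ (x + y) (T (x + y)) : ℂ).re - (inner ℂ (x - y) (T (x - y)) : ℂ).re := by
    intro x y
    have e1 : (inner ℂ (x + y) (T (x + y)) : ℂ) - inner ℂ (x - y) (T (x - y)) =
        2 * inner ℂ x (T y) + 2 * (inner ℂ y (T x) : ℂ) := by
      simp only [map_add, map_sub, inner_add_left, inner_add_right, inner_sub_left,
        inner_sub_right]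
      ring
    have e2 : (inner ℂ x (T y) : ℂ) = inner ℂ (T x) y := by
      conv_rhs => rw [← hadj]
      rw [adjoint_inner_left]
    have e3 : (inner ℂ y (T x) : ℂ) = starRingEnd ℂ (inner ℂ (T x) y) := by
      rw [← inner_conj_symm]
    have := congrArg Complex.re e1
    simp only [Complex.sub_re, Complex.add_re, Complex.mul_re] at this
    rw [e2, e3] at this
    simp only [Complex.conj_re, Complex.conj_im] at this
    rw [this]; norm_num; ring
  have bound : ∀ x y : EuclideanSpace ℂ (Fin n),
      4 * (inner ℂ (T x) y : ℂ).re ≤ 2 * c * (‖x‖ ^ 2 + ‖y‖ ^ 2) := by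
    intro x y
    rw [key x y]
    have h1 := h (x + y)
    have h2 := h (x - y)
    have hp : ‖x + y‖ ^ 2 + ‖x - y‖ ^ 2 = 2 * (‖x‖ ^ 2 + ‖y‖ ^ 2) := by
      have := parallelogram_law_with_norm ℂ x y
      nlinarith [this]
    nlinarith [abs_le.mp h1, abs_le.mp h2]
  refine ContinuousLinearMap.opNorm_le_bound _ hc ?_
  intro x
  by_cases hTx : T x = 0
  · rw [hTx]; simp; positivity
  have hTxn : (0:ℝ) < ‖T x‖ := norm_pos_iff.mpr hTx
  set y : EuclideanSpace ℂ (Fin n) := ((‖x‖ / ‖T x‖ : ℝ) : ℂ) • T x with hy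
  have hinner : (inner ℂ (T x) y : ℂ).re = ‖x‖ * ‖T x‖ := by
    have e : (inner ℂ (T x) y : ℂ) = ((‖x‖ / ‖T x‖ * ‖T x‖ ^ 2 : ℝ) : ℂ) := by
      rw [hy, inner_smul_right, inner_self_eq_norm_sq_to_K]
      push_cast
      field_simp
      rfl
    rw [e, Complex.ofReal_re]
    rw [div_mul_eq_mul_div, pow_two, mul_comm ‖T x‖ ‖T x‖, ← mul_assoc,
      mul_div_assoc, div_self hTxn.ne', mul_one]
  have hyn : ‖y‖ = ‖x‖ := by
    rw [hy, norm_smul]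
    simp only [Complex.norm_real, Real.norm_eq_abs,
      abs_of_nonneg (div_nonneg (norm_nonneg x) (norm_nonneg (T x)))]
    field_simp
  have hxn : (0:ℝ) < ‖x‖ := by
    rcases eq_or_ne x 0 with rfl | hx0
    · exact absurd (map_zero T) hTx
    · exact norm_pos_iff.mpr hx0
  have := bound x y
  rw [hinner, hyn] at this
  nlinarith

open scoped MatrixOrder

set_option maxHeartbeats 1600000 in
set_option synthInstance.maxHeartbeats 1000000 in
lemma sector_opnorm_le {n : ℕ} (hn : 1 ≤ n) {α : ℝ} (hα0 : 0 ≤ α) (hα : α < Real.pi / 2)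
    {A : Matrix (Fin n) (Fin n) ℂ} (hA : InSector α A) :
    opNorm A ≤ (Real.cos α)⁻¹ * nradius A := by
  have hπ := Real.pi_pos
  have hcos : 0 < Real.cos α := Real.cos_pos_of_mem_Ioo ⟨by linarith, hα⟩
  have htan : 0 ≤ Real.tan α := Real.tan_nonneg_of_nonneg_of_le_pi_div_two hα0 hα.le
  set w := nradius A with hw
  have hw0 : 0 ≤ w := nradius_nonneg hn A
  set T := Matrix.toEuclideanCLM (𝕜 := ℂ) A with hT
  -- scaling of quadratic form
  have hmulz : ∀ (x : EuclideanSpace ℂ (Fin n)), x ≠ 0 →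
      (inner ℂ x (T x) : ℂ) = ((‖x‖ * ‖x‖ : ℝ) : ℂ) *
        inner ℂ (((‖x‖⁻¹ : ℝ) : ℂ) • x) (T (((‖x‖⁻¹ : ℝ) : ℂ) • x)) := by
    intro x hx
    have hxn : (0:ℝ) < ‖x‖ := norm_pos_iff.mpr hx
    rw [_root_.map_smul, inner_smul_left, inner_smul_right, Complex.conj_ofReal]
    push_cast
    field_simp
  have hun : ∀ (x : EuclideanSpace ℂ (Fin n)), x ≠ 0 → ‖(((‖x‖⁻¹ : ℝ) : ℂ) • x)‖ = 1 := by
    intro x hx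
    have hxn : (0:ℝ) < ‖x‖ := norm_pos_iff.mpr hx
    rw [norm_smul]
    simp [abs_of_nonneg (inv_nonneg.mpr hxn.le)]
    field_simp
  have hsc : ∀ x : EuclideanSpace ℂ (Fin n), ‖(inner ℂ x (T x) : ℂ)‖ ≤ w * ‖x‖ ^ 2 := by
    intro x
    rcases eq_or_ne x 0 with rfl | hx
    · simp
    · have hxn : (0:ℝ) < ‖x‖ := norm_pos_iff.mpr hx
      rw [hmulz x hx, norm_mul]
      have h1 : ‖(inner ℂ (((‖x‖⁻¹ : ℝ) : ℂ) • x) (T (((‖x‖⁻¹ : ℝ) : ℂ) • x)) : ℂ)‖ ≤ w := by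
        rw [hw, hT]; exact le_nradius A (hun x hx)
      have h2 : ‖(((‖x‖ * ‖x‖ : ℝ)) : ℂ)‖ = ‖x‖ * ‖x‖ := by
        rw [Complex.norm_real, Real.norm_eq_abs, abs_of_nonneg (by positivity)]
      rw [h2, pow_two]
      nlinarith [norm_nonneg (inner ℂ (((‖x‖⁻¹ : ℝ) : ℂ) • x) (T (((‖x‖⁻¹ : ℝ) : ℂ) • x)) : ℂ)]
  -- sector condition for all vectors
  have hsec : ∀ x : EuclideanSpace ℂ (Fin n),
      |(inner ℂ x (T x) : ℂ).im| ≤ Real.tan α * (inner ℂ x (T x) : ℂ).re := by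
    intro x
    rcases eq_or_ne x 0 with rfl | hx
    · simp
    · have hxn : (0:ℝ) < ‖x‖ := norm_pos_iff.mpr hx
      have h0 := hA.2 _ (hun x hx)
      rw [hmulz x hx]
      set z : ℂ := inner ℂ (((‖x‖⁻¹ : ℝ) : ℂ) • x) (T (((‖x‖⁻¹ : ℝ) : ℂ) • x)) with hz
      have him : (((‖x‖ * ‖x‖ : ℝ) : ℂ) * z).im = (‖x‖ * ‖x‖) * z.im := by
        simp [Complex.mul_im]
      have hre : (((‖x‖ * ‖x‖ : ℝ) : ℂ) * z).re = (‖x‖ * ‖x‖) * z.re := by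
        simp [Complex.mul_re]
      rw [him, hre, abs_mul, abs_of_nonneg (by positivity : (0:ℝ) ≤ ‖x‖ * ‖x‖)]
      calc ‖x‖ * ‖x‖ * |z.im| ≤ ‖x‖ * ‖x‖ * (Real.tan α * z.re) := by
            apply mul_le_mul_of_nonneg_left h0 (by positivity)
        _ = Real.tan α * (‖x‖ * ‖x‖ * z.re) := by ring
  -- real and imaginary parts as operators
  set Hcl := (1/2 : ℂ) • (T + star T) with hHdef
  set Kcl := (-(Complex.I)/2) • (T - star T) with hKdef
  have hconj : ∀ x : EuclideanSpace ℂ (Fin n),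
      (inner ℂ x (star T x) : ℂ) = starRingEnd ℂ (inner ℂ x (T x)) := by
    intro x
    rw [star_eq_adjoint, ContinuousLinearMap.adjoint_inner_right, ← inner_conj_symm]
  have hHin : ∀ x : EuclideanSpace ℂ (Fin n),
      (inner ℂ x (Hcl x) : ℂ) = (((inner ℂ x (T x) : ℂ).re : ℝ) : ℂ) := by
    intro x
    rw [hHdef]
    simp only [ContinuousLinearMap.smul_apply, ContinuousLinearMap.add_apply,
      inner_smul_right, inner_add_right]
    rw [hconj x, Complex.add_conj]
    push_cast
    ring
  have hKin : ∀ x : EuclideanSpace ℂ (Fin n),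
      (inner ℂ x (Kcl x) : ℂ) = (((inner ℂ x (T x) : ℂ).im : ℝ) : ℂ) := by
    intro x
    rw [hKdef]
    simp only [ContinuousLinearMap.smul_apply, ContinuousLinearMap.sub_apply,
      inner_smul_right, inner_sub_right]
    rw [hconj x, Complex.sub_conj]
    push_cast
    try linear_combination (-((inner ℂ x (T x) : ℂ).im : ℂ)) * Complex.I_sq
  -- the square root of the real part
  have hPSD : (matRe A).PosSemidef := hA.1.posSemidef
  set Rm := CFC.sqrt (matRe A) with hRmdef
  set R := Matrix.toEuclideanCLM (𝕜 := ℂ) Rm with hRdef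
  have hHcl_eq : Matrix.toEuclideanCLM (𝕜 := ℂ) (matRe A) = Hcl := by
    rw [show matRe A = (1 / 2 : ℂ) • (A + Aᴴ) from rfl, _root_.map_smul, _root_.map_add,
      ← Matrix.star_eq_conjTranspose, map_star, hHdef, hT]
    try norm_num
  have hRsa : star R = R := by
    rw [hRdef, ← map_star]
    congr 1
    rw [Matrix.star_eq_conjTranspose]
    exact (CFC.sqrt_nonneg (matRe A)).posSemidef.1
  have hRadj : ContinuousLinearMap.adjoint R = R := by rw [← star_eq_adjoint, hRsa]
  have hRR : R * R = Hcl := by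
    rw [hRdef, ← _root_.map_mul, (CFC.sqrt_mul_sqrt_self (matRe A) hPSD.nonneg), hHcl_eq]
  have hRu : IsUnit R := by
    have h1 : IsUnit (matRe A) := hA.1.isUnit
    have hd : IsUnit (matRe A).det := (Matrix.isUnit_iff_isUnit_det _).mp h1
    have hdet : Rm.det * Rm.det = (matRe A).det := by
      rw [← Matrix.det_mul, (CFC.sqrt_mul_sqrt_self (matRe A) hPSD.nonneg)]
    rw [← hdet] at hd
    have : IsUnit Rm := (Matrix.isUnit_iff_isUnit_det _).mpr (isUnit_of_mul_isUnit_left hd)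
    exact this.map _
  obtain ⟨u, hu⟩ := hRu
  set Ri : EuclideanSpace ℂ (Fin n) →L[ℂ] EuclideanSpace ℂ (Fin n) := ↑u⁻¹ with hRidef
  have hui : R * Ri = 1 := by rw [← hu]; exact u.mul_inv
  have hiu : Ri * R = 1 := by rw [← hu]; exact u.inv_mul
  have hRisa : star Ri = Ri := by
    have h1 : star Ri * R = 1 := by
      conv_lhs => rw [← hRsa]
      rw [← StarMul.star_mul, hui, star_one]
    calc star Ri = star Ri * (R * Ri) := by rw [hui, mul_one]
      _ = (star Ri * R) * Ri := by rw [mul_assoc]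
      _ = Ri := by rw [h1, one_mul]
  have hRiadj : ContinuousLinearMap.adjoint Ri = Ri := by rw [← star_eq_adjoint, hRisa]
  -- S
  set S := Ri * Kcl * Ri with hSdef
  have hKsa : star Kcl = Kcl := by
    rw [hKdef]
    have hss : star (T - star T) = star T - T := by
      have h := star_sub T (star T)
      rwa [star_star] at h
    rw [star_smul, hss]
    have h2 : star (-(Complex.I)/2 : ℂ) = Complex.I/2 := by simp
    rw [h2]
    module
  have hSsa : star S = S := by
    rw [hSdef, StarMul.star_mul, StarMul.star_mul, hRisa, hKsa, mul_assoc]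
  have hSbound : ∀ y : EuclideanSpace ℂ (Fin n),
      |(inner ℂ y (S y) : ℂ).re| ≤ Real.tan α * ‖y‖ ^ 2 := by
    intro y
    have hRRi : R (Ri y) = y := by
      rw [← ContinuousLinearMap.mul_apply, hui, ContinuousLinearMap.one_apply]
    have e1 : (inner ℂ y (S y) : ℂ) = inner ℂ (Ri y) (Kcl (Ri y)) := by
      have h0 : S y = Ri (Kcl (Ri y)) := rfl
      rw [h0]
      have := ContinuousLinearMap.adjoint_inner_right Ri y (Kcl (Ri y))
      rw [hRiadj] at this
      exact this
    have e2 : (inner ℂ (Ri y) (Hcl (Ri y)) : ℂ).re = ‖y‖ ^ 2 := by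
      have c1 : Hcl (Ri y) = R y := by
        rw [← hRR, ContinuousLinearMap.mul_apply, hRRi]
      have c2 : (inner ℂ (Ri y) (R y) : ℂ) = inner ℂ (R (Ri y)) y := by
        have := ContinuousLinearMap.adjoint_inner_right R (Ri y) y
        rw [hRadj] at this
        exact this
      rw [c1, c2, hRRi, inner_self_eq_norm_sq_to_K]
      norm_cast
    have e2' : (inner ℂ (Ri y) (T (Ri y)) : ℂ).re = ‖y‖ ^ 2 := by
      have := e2
      rw [hHin, Complex.ofReal_re] at this
      exact this
    rw [e1, hKin, Complex.ofReal_re, ← e2']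
    exact hsec (Ri y)
  have hSnorm : ‖S‖ ≤ Real.tan α := selfadj_norm_le hSsa htan hSbound
  -- the middle factor
  set M1 : EuclideanSpace ℂ (Fin n) →L[ℂ] EuclideanSpace ℂ (Fin n) := 1 + Complex.I • S
    with hM1def
  have hTfac : T = R * M1 * R := by
    have hK : R * S * R = Kcl := by
      rw [hSdef]
      have : R * (Ri * Kcl * Ri) * R = (R * Ri) * Kcl * (Ri * R) := by
        simp only [mul_assoc]
      rw [this, hui, hiu, one_mul, mul_one]
    have expand : R * M1 * R = R * R + Complex.I • (R * S * R) := by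
      rw [hM1def, mul_add, add_mul, mul_one, mul_smul_comm Complex.I R S,
        smul_mul_assoc Complex.I (R * S) R]
    rw [expand, hRR, hK]
    have hIK : Complex.I • Kcl = (1/2 : ℂ) • (T - star T) := by
      rw [hKdef, smul_smul Complex.I (-(Complex.I)/2) (T - star T)]
      congr 1
      rw [← mul_div_assoc, mul_neg, Complex.I_mul_I, neg_neg]
    rw [hIK, hHdef]
    module
  -- norm of the middle factor
  have hM1bound : ∀ v : EuclideanSpace ℂ (Fin n), ‖M1 v‖ ≤ (Real.cos α)⁻¹ * ‖v‖ := by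
    intro v
    have hcross : (inner ℂ v (S v) : ℂ).im = 0 := by
      have h1 : starRingEnd ℂ (inner ℂ v (S v)) = inner ℂ v (S v) := by
        rw [inner_conj_symm]
        have := ContinuousLinearMap.adjoint_inner_left S v v
        rw [← star_eq_adjoint, hSsa] at this
        exact this
      exact Complex.conj_eq_iff_im.mp h1
    have hexp : ‖M1 v‖ ^ 2 = ‖v‖ ^ 2 + ‖S v‖ ^ 2 := by
      have h0 : M1 v = v + Complex.I • S v := by
        rw [hM1def]
        simp only [ContinuousLinearMap.add_apply, ContinuousLinearMap.one_apply,
          ContinuousLinearMap.smul_apply]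
      rw [h0, @norm_add_sq ℂ _ _ _ _ v (Complex.I • S v)]
      have hre : RCLike.re (inner ℂ v (Complex.I • S v) : ℂ) = 0 := by
        rw [inner_smul_right]
        simp only [RCLike.re_to_complex, Complex.mul_re, Complex.I_re, Complex.I_im]
        rw [hcross]
        ring
      rw [hre]
      have hni : ‖Complex.I • S v‖ = ‖S v‖ := by
        rw [norm_smul, Complex.norm_I, one_mul]
      rw [hni]
      ring
    have hSu : ‖S v‖ ≤ Real.tan α * ‖v‖ :=
      (S.le_opNorm v).trans (mul_le_mul_of_nonneg_right hSnorm (norm_nonneg v))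
    have h1t : (Real.cos α)⁻¹ ^ 2 = 1 + Real.tan α ^ 2 := by
      rw [inv_pow, ← Real.inv_one_add_tan_sq hcos.ne', inv_inv]
    have hsq : ‖M1 v‖ ^ 2 ≤ ((Real.cos α)⁻¹ * ‖v‖) ^ 2 := by
      rw [hexp, mul_pow, h1t]
      nlinarith [norm_nonneg (S v), norm_nonneg v]
    have hb : 0 ≤ (Real.cos α)⁻¹ * ‖v‖ := by positivity
    have := Real.sqrt_le_sqrt hsq
    rwa [Real.sqrt_sq (norm_nonneg _), Real.sqrt_sq hb] at this
  -- norm of R applications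
  have hRy : ∀ y : EuclideanSpace ℂ (Fin n), ‖R y‖ ≤ Real.sqrt w * ‖y‖ := by
    intro y
    have c2 : (inner ℂ y (R (R y)) : ℂ) = inner ℂ (R y) (R y) := by
      have := ContinuousLinearMap.adjoint_inner_right R y (R y)
      rw [hRadj] at this
      exact this
    have c3 : ‖R y‖ ^ 2 = (inner ℂ y (Hcl y) : ℂ).re := by
      rw [← hRR, ContinuousLinearMap.mul_apply, c2, inner_self_eq_norm_sq_to_K]
      norm_cast
    have c4 : ‖R y‖ ^ 2 ≤ w * ‖y‖ ^ 2 := by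
      rw [c3, hHin, Complex.ofReal_re]
      calc (inner ℂ y (T y) : ℂ).re ≤ ‖(inner ℂ y (T y) : ℂ)‖ := Complex.re_le_norm _
        _ ≤ w * ‖y‖ ^ 2 := hsc y
    have c5 : Real.sqrt (‖R y‖ ^ 2) ≤ Real.sqrt (w * ‖y‖ ^ 2) := Real.sqrt_le_sqrt c4
    rw [Real.sqrt_sq (norm_nonneg _), Real.sqrt_mul hw0, Real.sqrt_sq (norm_nonneg _)] at c5
    exact c5
  -- conclude
  rw [show opNorm A = ‖T‖ from rfl]
  refine ContinuousLinearMap.opNorm_le_bound _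
    (mul_nonneg (inv_nonneg.mpr hcos.le) (hw ▸ hw0)) ?_
  intro x
  have hTx : T x = R (M1 (R x)) := by
    rw [hTfac]
    rfl
  have step1 : ‖T x‖ ≤ Real.sqrt w * ‖M1 (R x)‖ := by rw [hTx]; exact hRy _
  have step2 : ‖M1 (R x)‖ ≤ (Real.cos α)⁻¹ * ‖R x‖ := hM1bound _
  have step3 : ‖R x‖ ≤ Real.sqrt w * ‖x‖ := hRy x
  have hsw : Real.sqrt w * Real.sqrt w = w := Real.mul_self_sqrt hw0
  have hsw0 : 0 ≤ Real.sqrt w := Real.sqrt_nonneg w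
  have hc0 : 0 ≤ (Real.cos α)⁻¹ := by positivity
  calc ‖T x‖ ≤ Real.sqrt w * ‖M1 (R x)‖ := step1
    _ ≤ Real.sqrt w * ((Real.cos α)⁻¹ * ‖R x‖) := by
        apply mul_le_mul_of_nonneg_left step2 hsw0
    _ ≤ Real.sqrt w * ((Real.cos α)⁻¹ * (Real.sqrt w * ‖x‖)) := by
        apply mul_le_mul_of_nonneg_left (mul_le_mul_of_nonneg_left step3 hc0) hsw0
    _ = (Real.cos α)⁻¹ * nradius A * ‖x‖ := by
        rw [← hw, show Real.sqrt w * ((Real.cos α)⁻¹ * (Real.sqrt w * ‖x‖)) =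
          (Real.cos α)⁻¹ * ((Real.sqrt w * Real.sqrt w) * ‖x‖) from by ring, hsw]
        ring


theorem stmt5 {n : ℕ} (hn : 1 ≤ n) {α : ℝ} (hα0 : 0 ≤ α) (hα : α < Real.pi / 2)
    {A B : Matrix (Fin n) (Fin n) ℂ} (hA : InSector α A) (hB : InSector α B) :
    nradius (A * B) ≤ ((Real.cos α)⁻¹) ^ 2 * (nradius A * nradius B) := by
  have hπ := Real.pi_pos
  have hcos : 0 < Real.cos α := Real.cos_pos_of_mem_Ioo ⟨by linarith, hα⟩
  have h1 : opNorm A ≤ (Real.cos α)⁻¹ * nradius A := sector_opnorm_le hn hα0 hα hA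
  have h2 : opNorm B ≤ (Real.cos α)⁻¹ * nradius B := sector_opnorm_le hn hα0 hα hB
  have hAB : nradius (A * B) ≤ opNorm A * opNorm B := by
    apply Real.sSup_le
    · rintro r ⟨x, hx, rfl⟩
      have hm : Matrix.toEuclideanCLM (𝕜 := ℂ) (A * B) =
          Matrix.toEuclideanCLM (𝕜 := ℂ) A * Matrix.toEuclideanCLM (𝕜 := ℂ) B :=
        _root_.map_mul _ _ _
      rw [hm]
      set TA := Matrix.toEuclideanCLM (𝕜 := ℂ) A
      set TB := Matrix.toEuclideanCLM (𝕜 := ℂ) B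
      calc ‖(inner ℂ x ((TA * TB) x) : ℂ)‖
          ≤ ‖x‖ * ‖(TA * TB) x‖ := norm_inner_le_norm _ _
        _ = ‖TA (TB x)‖ := by rw [hx, one_mul, ContinuousLinearMap.mul_apply]
        _ ≤ ‖TA‖ * ‖TB x‖ := TA.le_opNorm _
        _ ≤ ‖TA‖ * (‖TB‖ * ‖x‖) :=
            mul_le_mul_of_nonneg_left (TB.le_opNorm x) (norm_nonneg _)
        _ = opNorm A * opNorm B := by rw [hx, mul_one]; rfl
    · exact mul_nonneg (norm_nonneg _) (norm_nonneg _)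
  have hwA : 0 ≤ nradius A := nradius_nonneg hn A
  have hwB : 0 ≤ nradius B := nradius_nonneg hn B
  have hc : 0 ≤ (Real.cos α)⁻¹ := inv_nonneg.mpr hcos.le
  calc nradius (A * B) ≤ opNorm A * opNorm B := hAB
    _ ≤ ((Real.cos α)⁻¹ * nradius A) * ((Real.cos α)⁻¹ * nradius B) :=
        mul_le_mul h1 h2 (norm_nonneg _) (mul_nonneg hc hwA)
    _ = ((Real.cos α)⁻¹) ^ 2 * (nradius A * nradius B) := by ring
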